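/- For every integer n ≥ 1 and every λ ∈ k with λ ≠ 0, the k-vector space of Λ_e-module endomorphisms of the band module B(n,λ) — i.e. tuples (f_1,…,f_e) of k-linear maps f_i : B(n,λ)_i → B(n,λ)_i commuting with all structure maps — has dimension n² + n. -/

import Mathlib

/-! Common framework: representations of the quiver Q_e / modules over the
generalized Brauer star algebra Λ_e, encoded as a module `V` together with
endomorphisms `v i` (images of the vertex idempotents), `a i` (images of the
arrows; `a i` is the arrow leaving vertex `i`, with `a ⟨e-1⟩` the arrow
`α_e : e → 1`) and `d` (image of the loop `δ`). -/

namespace GBTA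

structure PreRep (R : Type) [CommRing R] (e : ℕ) : Type 1 where
  V : Type
  [instAdd : AddCommGroup V]
  [instMod : Module R V]
  v : Fin e → Module.End R V
  a : Fin e → Module.End R V
  d : Module.End R V

attribute [instance] PreRep.instAdd PreRep.instMod

variable {R : Type} [CommRing R] {e : ℕ}

/-- The (0-based) index of the vertex `e`. -/
def ve (e : ℕ) [NeZero e] : Fin e :=
  ⟨e - 1, by have := Nat.pos_of_ne_zero (NeZero.ne e); omega⟩

/-- The (0-based) index of the vertex `e - 1`. -/
def vem (e : ℕ) [NeZero e] : Fin e :=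
  ⟨e - 2, by have := Nat.pos_of_ne_zero (NeZero.ne e); omega⟩

/-- The cycle `C_i`: the composite of the `e` cyclically consecutive arrows
starting with the arrow leaving vertex `i` (composites written right to left). -/
def cyc [NeZero e] (ρ : PreRep R e) (i : Fin e) : Module.End R ρ.V :=
  (((List.range e).reverse).map fun l => ρ.a (i + Fin.ofNat e l)).prod

/-- The defining relations of the generalized Brauer star algebra `Λ_e`. -/
def Satisfies [NeZero e] (ρ : PreRep R e) : Prop :=
  (∀ i j : Fin e, i ≠ j → ρ.v i * ρ.v j = 0) ∧
  (∀ i : Fin e, ρ.v i * ρ.v i = ρ.v i) ∧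
  ((∑ i : Fin e, ρ.v i) = 1) ∧
  (∀ i : Fin e, ρ.a i = ρ.v (i + 1) * ρ.a i * ρ.v i) ∧
  (ρ.d = ρ.v (ve e) * ρ.d * ρ.v (ve e)) ∧
  (ρ.d * ρ.a (vem e) = 0) ∧
  (ρ.a (ve e) * ρ.d = 0) ∧
  (ρ.d * ρ.d = cyc ρ (ve e) * cyc ρ (ve e)) ∧
  (∀ i : Fin e, i ≠ ve e → ρ.a i * (cyc ρ i * cyc ρ i) = 0)

/-- The space of `Λ_e`-module homomorphisms `ρ → σ`: linear maps commuting with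
all the structure maps. -/
def homSet (ρ σ : PreRep R e) : Submodule R (ρ.V →ₗ[R] σ.V) where
  carrier := {f | (∀ i, f ∘ₗ ρ.v i = σ.v i ∘ₗ f) ∧ (∀ i, f ∘ₗ ρ.a i = σ.a i ∘ₗ f) ∧
    f ∘ₗ ρ.d = σ.d ∘ₗ f}
  add_mem' := by
    rintro f g ⟨hfv, hfa, hfd⟩ ⟨hgv, hga, hgd⟩
    exact ⟨fun i => by simp only [LinearMap.add_comp, LinearMap.comp_add, hfv i, hgv i],
      fun i => by simp only [LinearMap.add_comp, LinearMap.comp_add, hfa i, hga i],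
      by simp only [LinearMap.add_comp, LinearMap.comp_add, hfd, hgd]⟩
  zero_mem' := ⟨fun i => by simp, fun i => by simp, by simp⟩
  smul_mem' := by
    rintro c f ⟨hfv, hfa, hfd⟩
    exact ⟨fun i => by simp only [LinearMap.smul_comp, LinearMap.comp_smul, hfv i],
      fun i => by simp only [LinearMap.smul_comp, LinearMap.comp_smul, hfa i],
      by simp only [LinearMap.smul_comp, LinearMap.comp_smul, hfd]⟩

/-- Projectivity of a `Λ_e`-module, via the lifting property in the category of
`Λ_e`-modules. -/
def IsProjective [NeZero e] (P : PreRep R e) : Prop :=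
  Satisfies P ∧
  ∀ (A B : PreRep R e), Satisfies A → Satisfies B →
    ∀ p ∈ homSet A B, Function.Surjective p →
      ∀ g ∈ homSet P B, ∃ h ∈ homSet P A, p ∘ₗ h = g

/-- An endomorphism `f` of `ρ` factors through a projective `Λ_e`-module. -/
def FactorsThroughProjective [NeZero e] (ρ : PreRep R e) (f : ρ.V →ₗ[R] ρ.V) : Prop :=
  ∃ P : PreRep R e, IsProjective P ∧ ∃ g ∈ homSet ρ P, ∃ h ∈ homSet P ρ, f = h ∘ₗ g

/-- "The stable endomorphism ring of `ρ` is isomorphic to the scalars": the identity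
does not factor through a projective, and modulo endomorphisms factoring through
projectives every endomorphism is a scalar multiple of the identity. -/
def StableEndIsoScalars [NeZero e] (ρ : PreRep R e) : Prop :=
  (¬ FactorsThroughProjective ρ LinearMap.id) ∧
  ∀ f ∈ homSet ρ ρ, ∃ c : R, FactorsThroughProjective ρ (f - c • LinearMap.id)

/-- The linear map on `Fin m → W` sending the `src` coordinate to the `dst`
coordinate through `g`, and killing all other coordinates. -/
def mk1 {m : ℕ} {W : Type} [AddCommGroup W] [Module R W] (src dst : Fin m)
    (g : W →ₗ[R] W) : (Fin m → W) →ₗ[R] (Fin m → W) where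
  toFun x := fun r => if r = dst then g (x src) else 0
  map_add' x y := by funext r; by_cases h : r = dst <;> simp [h]
  map_smul' c x := by funext r; by_cases h : r = dst <;> simp [h]

/-- Projection onto the coordinates satisfying `S`. -/
def prj {m : ℕ} {W : Type} [AddCommGroup W] [Module R W] (S : Fin m → Prop)
    [DecidablePred S] : (Fin m → W) →ₗ[R] (Fin m → W) where
  toFun x := fun r => if S r then x r else 0
  map_add' x y := by funext r; by_cases h : S r <;> simp [h]
  map_smul' c x := by funext r; by_cases h : S r <;> simp [h]

/-- Last row index (`e`, 0-based) among `e+1` rows. -/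
def lastRow (e : ℕ) : Fin (e + 1) := ⟨e, Nat.lt_succ_self e⟩

/-- Second-to-last row index (`e-1`, 0-based) among `e+1` rows. -/
def sndRow (e : ℕ) : Fin (e + 1) := ⟨e - 1, by omega⟩

/-- The vertex carrying each of the `e+1` rows: row `r < e-1` sits at vertex `r`,
rows `e-1` and `e` sit at the vertex `e` (0-based index `e-1`). -/
def vrt (e : ℕ) [NeZero e] : Fin (e + 1) → Fin e := fun r =>
  if h : r.val < e - 1 then ⟨r.val, by omega⟩ else ve e


/-- The `n × n` Jordan block with eigenvalue `lam`. -/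
def jordan (R : Type) [CommRing R] (n : ℕ) (lam : R) : Matrix (Fin n) (Fin n) R :=
  Matrix.of fun i j => if i = j then lam else if (j : ℕ) = (i : ℕ) + 1 then 1 else 0

/-- The band module `B(n, lam)`. Rows `0, …, e-2` are the components `k^n` at the
vertices `1, …, e-1`; rows `e-1` and `e` are the two copies of `k^n` at vertex `e`. -/
@[reducible] def band (R : Type) [CommRing R] (e : ℕ) [NeZero e] (n : ℕ) (lam : R) : PreRep R e where
  V := Fin (e + 1) → Fin n → R
  v i := prj fun r => vrt e r = i
  a j :=
    if j.val = e - 1 then mk1 (sndRow e) ⟨0, by omega⟩ LinearMap.id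
    else if j.val = e - 2 then mk1 ⟨e - 2, by omega⟩ (lastRow e) LinearMap.id
    else mk1 ⟨j.val, Nat.lt_succ_of_lt j.isLt⟩ ⟨j.val + 1, Nat.succ_lt_succ j.isLt⟩ LinearMap.id
  d := mk1 (sndRow e) (lastRow e) (Matrix.mulVecLin (jordan R n lam))

/-- The band module `B(1, s)` (with `δ` acting through the scalar `s`); the standard
basis vector `c_i` (`1 ≤ i ≤ e-1`) is the `i-1`-st coordinate, `c_e` the `e-1`-st and
`c_{e+1}` the `e`-th. -/
@[reducible] def band1 (R : Type) [CommRing R] (e : ℕ) [NeZero e] (s : R) : PreRep R e where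
  V := Fin (e + 1) → R
  v i := prj fun r => vrt e r = i
  a j :=
    if j.val = e - 1 then mk1 (sndRow e) ⟨0, by omega⟩ LinearMap.id
    else if j.val = e - 2 then mk1 ⟨e - 2, by omega⟩ (lastRow e) LinearMap.id
    else mk1 ⟨j.val, Nat.lt_succ_of_lt j.isLt⟩ ⟨j.val + 1, Nat.succ_lt_succ j.isLt⟩ LinearMap.id
  d := mk1 (sndRow e) (lastRow e) (s • LinearMap.id)

/-- The projective module `P_e`, with basis `b_{i,1}, b_{i,2}` (row `i-1`) for
`1 ≤ i ≤ e-1` and `b_{e,1}, b_{e,2}` (row `e-1`), `b_{e,3}, b_{e,4}` (row `e`). -/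
@[reducible] def Pe (R : Type) [CommRing R] (e : ℕ) [NeZero e] : PreRep R e where
  V := Fin (e + 1) → Fin 2 → R
  v i := prj fun r => vrt e r = i
  a j :=
    if j.val = e - 1 then mk1 (sndRow e) ⟨0, by omega⟩ LinearMap.id
    else if j.val = e - 2 then
      mk1 ⟨e - 2, by omega⟩ (sndRow e) (Matrix.mulVecLin !![0, 0; 1, 0])
        + mk1 ⟨e - 2, by omega⟩ (lastRow e) (Matrix.mulVecLin !![0, 0; 0, 1])
    else mk1 ⟨j.val, Nat.lt_succ_of_lt j.isLt⟩ ⟨j.val + 1, Nat.succ_lt_succ j.isLt⟩ LinearMap.id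
  d := mk1 (sndRow e) (lastRow e) (Matrix.mulVecLin !![1, 0; 0, 0])
    + mk1 (lastRow e) (lastRow e) (Matrix.mulVecLin !![0, 0; 1, 0])

/-- `Mdef R e τ`: the representation with basis `m_1, …, m_{e+1}` (rows `0, …, e`),
`α_j(m_j) = m_{j+1}` for `j ≤ e-2`, `α_{e-1}(m_{e-1}) = τ · m_{e+1}`,
`α_e(m_e) = m_1`, `δ(m_e) = m_{e+1}`.  For `τ = 0` this is the string module `W`. -/
@[reducible] def Mdef (R : Type) [CommRing R] (e : ℕ) [NeZero e] (t : R) : PreRep R e where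
  V := Fin (e + 1) → R
  v i := prj fun r => vrt e r = i
  a j :=
    if j.val = e - 1 then mk1 (sndRow e) ⟨0, by omega⟩ LinearMap.id
    else if j.val = e - 2 then mk1 ⟨e - 2, by omega⟩ (lastRow e) (t • LinearMap.id)
    else mk1 ⟨j.val, Nat.lt_succ_of_lt j.isLt⟩ ⟨j.val + 1, Nat.succ_lt_succ j.isLt⟩ LinearMap.id
  d := mk1 (sndRow e) (lastRow e) LinearMap.id

/-- The uniserial module `U_{[i,j]}` (with `1 ≤ i ≤ j ≤ e`, 1-based). -/
@[reducible] def U (R : Type) [CommRing R] (e i j : ℕ) : PreRep R e where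
  V := Fin (j + 1 - i) → R
  v t := prj fun r => i - 1 + r.val = t.val
  a t :=
    if h : i ≤ t.val + 1 ∧ t.val + 1 ≤ j - 1 then
      mk1 ⟨t.val + 1 - i, by omega⟩ ⟨t.val + 2 - i, by omega⟩ LinearMap.id
    else 0
  d := 0

/-- The uniserial projective module `P_i` (`i0` is the 0-based index of the vertex),
with basis `p_0, …, p_{2e}` following the cycle of arrows twice around. -/
@[reducible] def Puni (R : Type) [CommRing R] (e : ℕ) [NeZero e] (i0 : ℕ) : PreRep R e where
  V := Fin (2 * e + 1) → R
  v t := prj fun r => (i0 + r.val) % e = t.val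
  a t := ∑ l : Fin (2 * e),
    if (i0 + l.val) % e = t.val then mk1 l.castSucc l.succ LinearMap.id else 0
  d := 0

/-- The simple module `S_e` at the vertex `e`. -/
@[reducible] def Se (R : Type) [CommRing R] (e : ℕ) [NeZero e] : PreRep R e where
  V := R
  v i := if i = ve e then 1 else 0
  a _ := 0
  d := 0

/-- Block upper triangular endomorphism `(x, y) ↦ (f x + θ y, f y)` of `V × V`. -/
def blk {V : Type} [AddCommGroup V] [Module R V] (f th : Module.End R V) :
    Module.End R (V × V) where
  toFun p := (f p.1 + th p.2, f p.2)
  map_add' p q := by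
    simp only [Prod.fst_add, Prod.snd_add, map_add, Prod.mk_add_mk, Prod.mk.injEq, and_true]
    abel
  map_smul' c p := by
    simp only [Prod.smul_fst, Prod.smul_snd, map_smul, Prod.smul_mk, Prod.mk.injEq,
      smul_add, RingHom.id_apply, and_self]

section Ext
variable [NeZero e]

/-- The data of a self-extension of `ρ`: for each generator of `Λ_e`, the
off-diagonal block of its action on `ρ.V × ρ.V`. -/
abbrev Cochain (ρ : PreRep R e) : Type :=
  (Fin e → Module.End R ρ.V) × (Fin e → Module.End R ρ.V) × Module.End R ρ.V

/-- The self-extension of `ρ` determined by the cochain `θ`. -/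
@[reducible] def extRep (ρ : PreRep R e) (th : Cochain ρ) : PreRep R e where
  V := ρ.V × ρ.V
  v i := blk (ρ.v i) (th.1 i)
  a i := blk (ρ.a i) (th.2.1 i)
  d := blk ρ.d th.2.2

/-- `θ` is a cocycle precisely when the corresponding extension is a `Λ_e`-module. -/
def IsCocycle (ρ : PreRep R e) (th : Cochain ρ) : Prop := Satisfies (extRep ρ th)

/-- The coboundary of `φ`; extensions differing by a coboundary are equivalent. -/
def bnd (ρ : PreRep R e) (phi : Module.End R ρ.V) : Cochain ρ :=
  (fun i => ρ.v i * phi - phi * ρ.v i, fun i => ρ.a i * phi - phi * ρ.a i,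
    ρ.d * phi - phi * ρ.d)

/-- `Ext¹_{Λ_e}(ρ, ρ)`, i.e. the space of self-extensions of `ρ` modulo equivalence
(equivalently cocycles modulo coboundaries), is one-dimensional. -/
def ExtSelfOneDimensional (ρ : PreRep R e) : Prop :=
  ∃ th0 : Cochain ρ, IsCocycle ρ th0 ∧ (∀ phi, th0 ≠ bnd ρ phi) ∧
    ∀ th : Cochain ρ, IsCocycle ρ th → ∃ (c : R) (phi : Module.End R ρ.V),
      th = c • th0 + bnd ρ phi

end Ext


/-- The endomorphism algebra of a representation. -/
def endAlg (ρ : PreRep R e) : Subalgebra R (Module.End R ρ.V) where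
  carrier := {f | (∀ i, f * ρ.v i = ρ.v i * f) ∧ (∀ i, f * ρ.a i = ρ.a i * f) ∧
    f * ρ.d = ρ.d * f}
  mul_mem' := by
    rintro f g ⟨hfv, hfa, hfd⟩ ⟨hgv, hga, hgd⟩
    refine ⟨fun i => ?_, fun i => ?_, ?_⟩
    · rw [mul_assoc, hgv i, ← mul_assoc, hfv i, mul_assoc]
    · rw [mul_assoc, hga i, ← mul_assoc, hfa i, mul_assoc]
    · rw [mul_assoc, hgd, ← mul_assoc, hfd, mul_assoc]
  one_mem' := ⟨fun i => by rw [one_mul, mul_one], fun i => by rw [one_mul, mul_one],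
    by rw [one_mul, mul_one]⟩
  add_mem' := by
    rintro f g ⟨hfv, hfa, hfd⟩ ⟨hgv, hga, hgd⟩
    exact ⟨fun i => by rw [add_mul, mul_add, hfv i, hgv i],
      fun i => by rw [add_mul, mul_add, hfa i, hga i],
      by rw [add_mul, mul_add, hfd, hgd]⟩
  zero_mem' := ⟨fun i => by rw [zero_mul, mul_zero], fun i => by rw [zero_mul, mul_zero],
    by rw [zero_mul, mul_zero]⟩
  algebraMap_mem' c :=
    ⟨fun i => Algebra.commutes c (ρ.v i), fun i => Algebra.commutes c (ρ.a i),
      Algebra.commutes c ρ.d⟩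

/-- The endomorphism `τ` of `B(1,λ)` (and of `W`): `c_e ↦ c_{e+1}`, all other
standard basis vectors to `0`. -/
def tau (R : Type) [CommRing R] (e : ℕ) : (Fin (e + 1) → R) →ₗ[R] (Fin (e + 1) → R) :=
  mk1 (sndRow e) (lastRow e) LinearMap.id

/-- The map `r₁ : B(1,λ) → P_e` (with parameter `μ` the coefficient on `b_{e,3}`):
`c_i ↦ b_{i,2}` for `1 ≤ i ≤ e-1`, `c_e ↦ b_{e,2} + μ b_{e,3}`, `c_{e+1} ↦ b_{e,4}`. -/
def r1 (R : Type) [CommRing R] (e : ℕ) (mu : R) :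
    (Fin (e + 1) → R) →ₗ[R] (Fin (e + 1) → Fin 2 → R) where
  toFun x := fun r c => if c = 1 then x r else if r = lastRow e then mu * x (sndRow e) else 0
  map_add' x y := by
    funext r c
    by_cases h : c = 1
    · simp [h]
    · by_cases h2 : r = lastRow e <;> simp [h, h2, mul_add]
  map_smul' t x := by
    funext r c
    by_cases h : c = 1
    · simp [h]
    · by_cases h2 : r = lastRow e <;> simp [h, h2] <;> ring

/-- The map `r₂ : B(1,λ) → P_e`: `c_e ↦ b_{e,4}`, all other basis vectors to `0`. -/
def r2 (R : Type) [CommRing R] (e : ℕ) :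
    (Fin (e + 1) → R) →ₗ[R] (Fin (e + 1) → Fin 2 → R) where
  toFun x := fun r c => if r = lastRow e ∧ c = 1 then x (sndRow e) else 0
  map_add' x y := by
    funext r c
    by_cases h : r = lastRow e ∧ c = 1 <;> simp [h]
  map_smul' t x := by
    funext r c
    by_cases h : r = lastRow e ∧ c = 1 <;> simp [h]

/-- The map `s₁ : P_e → B(1,λ)`: `b_{e,1} ↦ c_e`, `b_{e,2} ↦ c_{e+1}`,
`b_{e,3} ↦ λ c_{e+1}`, `b_{i,1} ↦ c_i`; zero on `b_{e,4}` and the `b_{i,2}`. -/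
def s1 (R : Type) [CommRing R] (e : ℕ) (lam : R) :
    (Fin (e + 1) → Fin 2 → R) →ₗ[R] (Fin (e + 1) → R) where
  toFun y := fun r =>
    if r = lastRow e then y (sndRow e) 1 + lam * y (lastRow e) 0 else y r 0
  map_add' x y := by
    funext r
    by_cases h : r = lastRow e <;> simp [h, mul_add] <;> ring
  map_smul' t x := by
    funext r
    by_cases h : r = lastRow e <;> simp [h] <;> ring

/-- The map `s₂ : P_e → B(1,λ)`: `b_{e,1} ↦ c_{e+1}`, all other basis vectors to `0`. -/
def s2 (R : Type) [CommRing R] (e : ℕ) :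
    (Fin (e + 1) → Fin 2 → R) →ₗ[R] (Fin (e + 1) → R) where
  toFun y := fun r => if r = lastRow e then y (sndRow e) 0 else 0
  map_add' x y := by funext r; by_cases h : r = lastRow e <;> simp [h]
  map_smul' t x := by funext r; by_cases h : r = lastRow e <;> simp [h]

/-- The map `g : W → P_e`, `w_e ↦ b_{e,3}`, `w_{e+1} ↦ b_{e,4}`, `w_j ↦ 0`. -/
def gW (R : Type) [CommRing R] (e : ℕ) :
    (Fin (e + 1) → R) →ₗ[R] (Fin (e + 1) → Fin 2 → R) where
  toFun x := fun r c =>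
    if r = lastRow e then (if c = 0 then x (sndRow e) else x (lastRow e)) else 0
  map_add' x y := by
    funext r c
    by_cases h : r = lastRow e <;> by_cases h2 : c = 0 <;> simp [h, h2]
  map_smul' t x := by
    funext r c
    by_cases h : r = lastRow e <;> by_cases h2 : c = 0 <;> simp [h, h2]

/-- The map `h : P_e → W`, `b_{e,1} ↦ w_e`, `b_{j,1} ↦ w_j`, `b_{e,3} ↦ w_{e+1}`,
zero on `b_{e,2}`, `b_{e,4}` and the `b_{j,2}`. -/
def hW (R : Type) [CommRing R] (e : ℕ) :
    (Fin (e + 1) → Fin 2 → R) →ₗ[R] (Fin (e + 1) → R) where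
  toFun y := fun r => y r 0
  map_add' x y := rfl
  map_smul' t x := rfl



/-! ### Auxiliary material for Statement 1 -/

section Aux1

variable {k : Type} [Field k]

lemma mk1_apply' {m : ℕ} {W : Type} [AddCommGroup W] [Module k W] (src dst : Fin m)
    (g : W →ₗ[k] W) (x : Fin m → W) (r : Fin m) :
    mk1 src dst g x r = if r = dst then g (x src) else 0 := rfl

lemma prj_apply' {m : ℕ} {W : Type} [AddCommGroup W] [Module k W] (S : Fin m → Prop)
    [DecidablePred S] (x : Fin m → W) (r : Fin m) :
    prj (R := k) S x r = if S r then x r else 0 := rfl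

lemma mk1_single_same {m : ℕ} {W : Type} [AddCommGroup W] [Module k W]
    (src dst : Fin m) (x : W) :
    mk1 (R := k) src dst LinearMap.id (Pi.single src x) = Pi.single dst x := by
  funext r
  rw [mk1_apply']
  simp [Pi.single_apply]

lemma mk1_single_g {m : ℕ} {W : Type} [AddCommGroup W] [Module k W]
    (src dst : Fin m) (g : W →ₗ[k] W) (x : W) :
    mk1 (R := k) src dst g (Pi.single src x) = Pi.single dst (g x) := by
  funext r
  rw [mk1_apply']
  simp [Pi.single_apply]

lemma mk1_single_other {m : ℕ} {W : Type} [AddCommGroup W] [Module k W]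
    (src dst s : Fin m) (x : W) (h : src ≠ s) :
    mk1 (R := k) src dst LinearMap.id (Pi.single s x) = 0 := by
  funext r
  rw [mk1_apply']
  simp [Pi.single_eq_of_ne h]

section VertexLemmas

variable {e : ℕ} [NeZero e]

lemma epos : 0 < e := Nat.pos_of_ne_zero (NeZero.ne e)

lemma vrt_snd : vrt e (sndRow e) = ve e := by
  have h : ¬ ((sndRow e : ℕ) < e - 1) := show ¬(e - 1 < e - 1) by omega
  rw [vrt, dif_neg h]

lemma vrt_last : vrt e (lastRow e) = ve e := by
  have h : ¬ ((lastRow e : ℕ) < e - 1) := show ¬(e < e - 1) by omega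
  rw [vrt, dif_neg h]

lemma snd_ne_last : sndRow e ≠ lastRow e := by
  have := epos (e := e)
  intro h
  have h2 : e - 1 = e := congrArg Fin.val h
  omega

lemma vrt_ne {r : Fin (e + 1)} (h1 : r ≠ sndRow e) (h2 : r ≠ lastRow e) :
    vrt e r ≠ ve e := by
  have hlt := r.isLt
  have h1' : (r : ℕ) ≠ e - 1 := fun h => h1 (Fin.ext h)
  have h2' : (r : ℕ) ≠ e := fun h => h2 (Fin.ext h)
  have hr : (r : ℕ) < e - 1 := by omega
  rw [vrt, dif_pos hr]
  intro h
  have h3 : (r : ℕ) = e - 1 := congrArg Fin.val h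
  omega

end VertexLemmas

/-! #### The centralizer of the Jordan block -/

section Cent

variable {n : ℕ} (lam : k)

/-- The nilpotent (upper shift) part of the Jordan block. -/
def Nmat (k : Type) [Field k] (n : ℕ) : Matrix (Fin n) (Fin n) k :=
  Matrix.of fun i j => if (j : ℕ) = (i : ℕ) + 1 then 1 else 0

/-- The upper triangular Toeplitz matrix with first row `c`. -/
def Tmat {k : Type} [Field k] {n : ℕ} (c : Fin n → k) : Matrix (Fin n) (Fin n) k :=
  Matrix.of fun i j => if h : (i : ℕ) ≤ (j : ℕ) then
    c ⟨(j : ℕ) - (i : ℕ), by have := j.isLt; omega⟩ else 0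

lemma jordan_decomp :
    jordan k n lam = lam • (1 : Matrix (Fin n) (Fin n) k) + Nmat k n := by
  ext i j
  simp only [jordan, Matrix.of_apply, Matrix.add_apply, Matrix.smul_apply,
    Matrix.one_apply, Nmat, smul_eq_mul]
  by_cases h : i = j
  · have hne : ¬ ((j : ℕ) = (i : ℕ) + 1) := by
      subst h; omega
    simp [h, hne]
  · simp [h]

lemma mul_N_apply (M : Matrix (Fin n) (Fin n) k) (i j : Fin n) :
    (M * Nmat k n) i j =
      if h : 1 ≤ (j : ℕ) then M i ⟨(j : ℕ) - 1, by have := j.isLt; omega⟩ else 0 := by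
  rw [Matrix.mul_apply]
  by_cases h : 1 ≤ (j : ℕ)
  · rw [dif_pos h]
    rw [Finset.sum_eq_single (⟨(j : ℕ) - 1, by have := j.isLt; omega⟩ : Fin n)]
    · simp only [Nmat, Matrix.of_apply]
      rw [if_pos (show (j : ℕ) = ((j : ℕ) - 1) + 1 by omega), mul_one]
    · intro b _ hb
      have hc : ¬ ((j : ℕ) = (b : ℕ) + 1) := by
        intro hcon
        exact hb (Fin.ext (show (b : ℕ) = (j : ℕ) - 1 by omega))
      simp [Nmat, hc]
    · intro habs; exact absurd (Finset.mem_univ _) habs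
  · rw [dif_neg h]
    apply Finset.sum_eq_zero
    intro b _
    have hc : ¬ ((j : ℕ) = (b : ℕ) + 1) := by omega
    simp [Nmat, hc]

lemma N_mul_apply (M : Matrix (Fin n) (Fin n) k) (i j : Fin n) :
    (Nmat k n * M) i j =
      if h : (i : ℕ) + 1 < n then M ⟨(i : ℕ) + 1, h⟩ j else 0 := by
  rw [Matrix.mul_apply]
  by_cases h : (i : ℕ) + 1 < n
  · rw [dif_pos h]
    rw [Finset.sum_eq_single (⟨(i : ℕ) + 1, h⟩ : Fin n)]
    · simp [Nmat]
    · intro b _ hb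
      have hc : ¬ ((b : ℕ) = (i : ℕ) + 1) := by
        intro hcon
        exact hb (Fin.ext (by simpa using hcon))
      simp [Nmat, hc]
    · intro habs; exact absurd (Finset.mem_univ _) habs
  · rw [dif_neg h]
    apply Finset.sum_eq_zero
    intro b _
    have hc : ¬ ((b : ℕ) = (i : ℕ) + 1) := by have := b.isLt; omega
    simp [Nmat, hc]

lemma Tmat_mul_N_comm (c : Fin n → k) : Tmat c * Nmat k n = Nmat k n * Tmat c := by
  ext i j
  rw [mul_N_apply, N_mul_apply]
  have hi := i.isLt
  have hj := j.isLt
  by_cases h1 : 1 ≤ (j : ℕ) <;> by_cases h2 : (i : ℕ) + 1 < n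
  · rw [dif_pos h1, dif_pos h2]
    simp only [Tmat, Matrix.of_apply]
    by_cases h3 : (i : ℕ) ≤ (j : ℕ) - 1
    · rw [dif_pos h3, dif_pos (show (i : ℕ) + 1 ≤ (j : ℕ) by omega)]
      congr 1
      exact Fin.ext (show (j : ℕ) - 1 - (i : ℕ) = (j : ℕ) - ((i : ℕ) + 1) by omega)
    · rw [dif_neg h3, dif_neg (show ¬((i : ℕ) + 1 ≤ (j : ℕ)) by omega)]
  · rw [dif_pos h1, dif_neg h2]
    simp only [Tmat, Matrix.of_apply]
    rw [dif_neg (show ¬((i : ℕ) ≤ (j : ℕ) - 1) by omega)]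
  · rw [dif_neg h1, dif_pos h2]
    simp only [Tmat, Matrix.of_apply]
    rw [dif_neg (show ¬((i : ℕ) + 1 ≤ (j : ℕ)) by omega)]
  · rw [dif_neg h1, dif_neg h2]

lemma Tmat_comm (c : Fin n → k) :
    Tmat c * jordan k n lam = jordan k n lam * Tmat c := by
  rw [jordan_decomp, Matrix.mul_add, Matrix.add_mul, Matrix.mul_smul, Matrix.smul_mul,
    Matrix.mul_one, Matrix.one_mul, Tmat_mul_N_comm]

/-- The Jordan block as an endomorphism. -/
def Jl (k : Type) [Field k] (n : ℕ) (lam : k) : Module.End k (Fin n → k) :=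
  Matrix.mulVecLin (jordan k n lam)

lemma Jl_apply (w : Fin n → k) (i : Fin n) :
    Jl k n lam w i = lam * w i +
      (if h : (i : ℕ) + 1 < n then w ⟨(i : ℕ) + 1, h⟩ else 0) := by
  simp only [Jl, Matrix.mulVecLin_apply, Matrix.mulVec, dotProduct]
  have step : ∀ l : Fin n, jordan k n lam i l * w l =
      (if l = i then lam * w l else 0) + (if (l : ℕ) = (i : ℕ) + 1 then w l else 0) := by
    intro l
    rcases eq_or_ne l i with h | h
    · have hx : ¬ ((i : ℕ) = (i : ℕ) + 1) := by omega
      simp [jordan, h, hx]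
    · by_cases h2 : (l : ℕ) = (i : ℕ) + 1 <;> simp [jordan, h, Ne.symm h, h2]
  rw [Finset.sum_congr rfl (fun l _ => step l), Finset.sum_add_distrib]
  congr 1
  · rw [Finset.sum_ite_eq' Finset.univ i (fun l => lam * w l)]
    simp
  · by_cases h : (i : ℕ) + 1 < n
    · rw [dif_pos h, Finset.sum_eq_single (⟨(i : ℕ) + 1, h⟩ : Fin n)]
      · rw [if_pos rfl]
      · intro b _ hb
        rw [if_neg (fun hc => hb (Fin.ext hc))]
      · intro habs; exact absurd (Finset.mem_univ _) habs
    · rw [dif_neg h, Finset.sum_eq_zero]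
      intro b _
      rw [if_neg (by have := b.isLt; omega)]

lemma Jl_single (j : Fin n) :
    Jl k n lam (Pi.single j 1) = lam • (Pi.single j 1 : Fin n → k) +
      (if h : 1 ≤ (j : ℕ) then
        (Pi.single (⟨(j : ℕ) - 1, by have := j.isLt; omega⟩ : Fin n) 1 : Fin n → k)
      else 0) := by
  funext i
  rw [Jl_apply]
  have hi := i.isLt
  have hj := j.isLt
  simp only [Pi.add_apply, Pi.smul_apply, smul_eq_mul]
  congr 1
  by_cases h1 : (i : ℕ) + 1 < n <;> by_cases h2 : 1 ≤ (j : ℕ)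
  · rw [dif_pos h1, dif_pos h2, Pi.single_apply, Pi.single_apply]
    by_cases h3 : (i : ℕ) + 1 = (j : ℕ)
    · rw [if_pos (Fin.ext (by simpa using h3)), if_pos (Fin.ext (by simp; omega))]
    · rw [if_neg (fun hc => h3 (by simpa using Fin.ext_iff.mp hc)),
        if_neg (fun hc => h3 (by have := Fin.ext_iff.mp hc; simp at this; omega))]
  · rw [dif_pos h1, dif_neg h2, Pi.single_apply,
      if_neg (fun hc => by have := Fin.ext_iff.mp hc; simp at this; omega)]
    simp
  · rw [dif_neg h1, dif_pos h2, Pi.single_apply,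
      if_neg (fun hc => by have := Fin.ext_iff.mp hc; simp at this; omega)]
  · rw [dif_neg h1, dif_neg h2]
    simp

lemma cent_eq_zero {n : ℕ} {lam : k} (A : Module.End k (Fin n → k))
    (hA : A ∘ₗ Jl k n lam = Jl k n lam ∘ₗ A)
    (h0 : ∀ j : Fin n, A (Pi.single j 1) ⟨0, j.pos⟩ = 0) : A = 0 := by
  have key : ∀ (i j : Fin n),
      (if h : 1 ≤ (j : ℕ) then
        A (Pi.single (⟨(j : ℕ) - 1, by have := j.isLt; omega⟩ : Fin n) 1) i else 0)
      = (if h : (i : ℕ) + 1 < n then A (Pi.single j 1) ⟨(i : ℕ) + 1, h⟩ else 0) := by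
    intro i j
    have h1 : A (Jl k n lam (Pi.single j 1)) i = Jl k n lam (A (Pi.single j 1)) i := by
      rw [← LinearMap.comp_apply, hA, LinearMap.comp_apply]
    rw [Jl_single, map_add, map_smul, Jl_apply] at h1
    by_cases h2 : 1 ≤ (j : ℕ)
    · rw [dif_pos h2] at h1 ⊢
      simp only [Pi.add_apply, Pi.smul_apply, smul_eq_mul] at h1
      exact add_left_cancel h1
    · rw [dif_neg h2] at h1 ⊢
      simp only [map_zero, Pi.add_apply, Pi.smul_apply, Pi.zero_apply, smul_eq_mul,
        add_zero] at h1
      exact (left_eq_add.mp h1).symm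
  have claim : ∀ (m : ℕ) (hm : m < n) (j : Fin n), A (Pi.single j 1) ⟨m, hm⟩ = 0 := by
    intro m
    induction m with
    | zero => intro hm j; exact h0 j
    | succ m ih =>
      intro hm j
      have hk := key ⟨m, by omega⟩ j
      rw [dif_pos (show ((⟨m, by omega⟩ : Fin n) : ℕ) + 1 < n from hm)] at hk
      rw [← hk]
      by_cases h2 : 1 ≤ (j : ℕ)
      · rw [dif_pos h2]; exact ih (by omega) _
      · rw [dif_neg h2]
  apply LinearMap.ext
  intro w
  have hz : ∀ j : Fin n, A (Pi.single j (1 : k)) = 0 := by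
    intro j
    funext i
    exact claim i.1 i.2 j
  have hw : w = ∑ j : Fin n, w j • (Pi.single j 1 : Fin n → k) := by
    funext i
    rw [Finset.sum_apply]
    simp [Pi.single_apply]
  rw [hw, map_sum]
  simp [hz]

end Cent

/-! #### The structure of endomorphisms of the band module -/

section BandEnd

variable (k) (e n : ℕ) [NeZero e] (lam : k)

/-- Extraction of the "diagonal" endomorphism. -/
def Af (f : (Fin (e + 1) → Fin n → k) →ₗ[k] (Fin (e + 1) → Fin n → k)) :
    Module.End k (Fin n → k) :=
  (LinearMap.proj (R := k) (sndRow e)) ∘ₗ f ∘ₗ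
    (LinearMap.single k (fun _ : Fin (e + 1) => Fin n → k) (sndRow e))

/-- Extraction of the "corner" endomorphism. -/
def Cf (f : (Fin (e + 1) → Fin n → k) →ₗ[k] (Fin (e + 1) → Fin n → k)) :
    Module.End k (Fin n → k) :=
  (LinearMap.proj (R := k) (lastRow e)) ∘ₗ f ∘ₗ
    (LinearMap.single k (fun _ : Fin (e + 1) => Fin n → k) (sndRow e))

lemma Af_apply (f : (Fin (e + 1) → Fin n → k) →ₗ[k] (Fin (e + 1) → Fin n → k))
    (x : Fin n → k) : Af k e n f x = f (Pi.single (sndRow e) x) (sndRow e) := rfl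

lemma Cf_apply (f : (Fin (e + 1) → Fin n → k) →ₗ[k] (Fin (e + 1) → Fin n → k))
    (x : Fin n → k) : Cf k e n f x = f (Pi.single (sndRow e) x) (lastRow e) := rfl

/-- The endomorphism of the band module determined by a pair `(A, C)`. -/
def Fm (A C : Module.End k (Fin n → k)) :
    (Fin (e + 1) → Fin n → k) →ₗ[k] (Fin (e + 1) → Fin n → k) where
  toFun v := fun r => A (v r) + if r = lastRow e then C (v (sndRow e)) else 0
  map_add' v w := by
    funext r
    by_cases h : r = lastRow e <;> simp [h] <;> abel
  map_smul' t v := by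
    funext r
    by_cases h : r = lastRow e <;> simp [h]

lemma Fm_apply (A C : Module.End k (Fin n → k)) (v : Fin (e + 1) → Fin n → k)
    (r : Fin (e + 1)) :
    Fm k e n A C v r = A (v r) + if r = lastRow e then C (v (sndRow e)) else 0 := rfl

lemma band_a_eq (j : Fin e) : (band k e n lam).a j =
    (if j.val = e - 1 then mk1 (sndRow e) ⟨0, by omega⟩ LinearMap.id
     else if j.val = e - 2 then mk1 ⟨e - 2, by omega⟩ (lastRow e) LinearMap.id
     else mk1 ⟨j.val, Nat.lt_succ_of_lt j.isLt⟩ ⟨j.val + 1, Nat.succ_lt_succ j.isLt⟩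
       LinearMap.id) := rfl

lemma band_v_eq (i : Fin e) :
    (band k e n lam).v i = prj (R := k) (fun r => vrt e r = i) := rfl

lemma band_d_eq : (band k e n lam).d = mk1 (sndRow e) (lastRow e) (Jl k n lam) := rfl

variable {k e n lam}

theorem band_struct (he : 2 ≤ e)
    (f : (Fin (e + 1) → Fin n → k) →ₗ[k] (Fin (e + 1) → Fin n → k))
    (hf : f ∈ homSet (band k e n lam) (band k e n lam)) :
    f = Fm k e n (Af k e n f) (Cf k e n f) := by
  obtain ⟨hv, ha, hd⟩ := hf
  -- fixed points of the vertex idempotent at `ve e`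
  have hfix : ∀ x : Fin n → k,
      (band k e n lam).v (ve e) (Pi.single (sndRow e) x) = Pi.single (sndRow e) x := by
    intro x
    funext r
    rw [band_v_eq, prj_apply']
    by_cases hr : r = sndRow e
    · subst hr; rw [if_pos vrt_snd]
    · rw [Pi.single_eq_of_ne hr, ite_self]
  have hsupp : ∀ (x : Fin n → k) (r : Fin (e + 1)), vrt e r ≠ ve e →
      f (Pi.single (sndRow e) x) r = 0 := by
    intro x r hr
    have h1 := LinearMap.congr_fun (hv (ve e)) (Pi.single (sndRow e) x)
    rw [LinearMap.comp_apply, LinearMap.comp_apply, hfix] at h1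
    have h2 := congrFun h1 r
    rw [band_v_eq, prj_apply', if_neg hr] at h2
    exact h2
  have hsnd : ∀ x : Fin n → k, f (Pi.single (sndRow e) x) =
      Pi.single (sndRow e) (Af k e n f x) + Pi.single (lastRow e) (Cf k e n f x) := by
    intro x
    funext r
    rw [Pi.add_apply]
    by_cases hr1 : r = sndRow e
    · subst hr1
      rw [Pi.single_eq_same, Pi.single_eq_of_ne snd_ne_last, add_zero]
      rfl
    · by_cases hr2 : r = lastRow e
      · subst hr2
        rw [Pi.single_eq_same, Pi.single_eq_of_ne (Ne.symm snd_ne_last), zero_add]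
        rfl
      · rw [Pi.single_eq_of_ne hr1, Pi.single_eq_of_ne hr2, add_zero]
        exact hsupp x r (vrt_ne hr1 hr2)
  have hchain : ∀ (m : ℕ) (hm : m ≤ e - 2), ∀ x : Fin n → k,
      f (Pi.single (⟨m, by omega⟩ : Fin (e + 1)) x) =
        Pi.single (⟨m, by omega⟩ : Fin (e + 1)) (Af k e n f x) := by
    intro m
    induction m with
    | zero =>
      intro _ x
      have haj := LinearMap.congr_fun (ha ⟨e - 1, by omega⟩) (Pi.single (sndRow e) x)
      rw [LinearMap.comp_apply, LinearMap.comp_apply, band_a_eq, if_pos rfl] at haj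
      rw [mk1_single_same, hsnd x, map_add, mk1_single_same,
        mk1_single_other _ _ _ _ snd_ne_last, add_zero] at haj
      exact haj
    | succ m ih =>
      intro hm x
      have haj := LinearMap.congr_fun (ha ⟨m, by omega⟩)
        (Pi.single (⟨m, by omega⟩ : Fin (e + 1)) x)
      rw [LinearMap.comp_apply, LinearMap.comp_apply, band_a_eq,
        if_neg (by simp; omega), if_neg (by simp; omega)] at haj
      rw [mk1_single_same] at haj
      rw [ih (by omega) x, mk1_single_same] at haj
      exact haj
  have hlast : ∀ x : Fin n → k, f (Pi.single (lastRow e) x) =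
      Pi.single (lastRow e) (Af k e n f x) := by
    intro x
    have haj := LinearMap.congr_fun (ha ⟨e - 2, by omega⟩)
      (Pi.single (⟨e - 2, by omega⟩ : Fin (e + 1)) x)
    rw [LinearMap.comp_apply, LinearMap.comp_apply, band_a_eq,
      if_neg (by simp; omega), if_pos rfl] at haj
    rw [mk1_single_same] at haj
    rw [hchain (e - 2) le_rfl x, mk1_single_same] at haj
    exact haj
  have hsingle : ∀ (r : Fin (e + 1)) (x : Fin n → k), f (Pi.single r x) =
      Pi.single r (Af k e n f x) +
        (if r = sndRow e then Pi.single (lastRow e) (Cf k e n f x) else 0) := by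
    intro r x
    by_cases h1 : r = sndRow e
    · subst h1; rw [if_pos rfl]; exact hsnd x
    · rw [if_neg h1, add_zero]
      by_cases h2 : r = lastRow e
      · subst h2; exact hlast x
      · have hr : (r : ℕ) ≤ e - 2 := by
          have := r.isLt
          simp only [Fin.ext_iff, sndRow, lastRow] at h1 h2
          omega
        exact hchain r.1 hr x
  apply LinearMap.ext
  intro v
  have hv' : f v = ∑ r : Fin (e + 1), f (Pi.single r (v r)) := by
    rw [← map_sum, Finset.univ_sum_single]
  rw [hv']
  rw [Finset.sum_congr rfl (fun r _ => hsingle r (v r)), Finset.sum_add_distrib]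
  funext r
  simp only [Pi.add_apply, Finset.sum_apply, Finset.sum_pi_single, ite_apply,
    Pi.zero_apply, Fintype.sum_ite_eq', Fintype.sum_ite_eq, Fm_apply, Pi.single_apply]

theorem Af_comm (he : 2 ≤ e)
    (f : (Fin (e + 1) → Fin n → k) →ₗ[k] (Fin (e + 1) → Fin n → k))
    (hf : f ∈ homSet (band k e n lam) (band k e n lam)) :
    Af k e n f ∘ₗ Jl k n lam = Jl k n lam ∘ₗ Af k e n f := by
  have hs := band_struct he f hf
  obtain ⟨hv, ha, hd⟩ := hf
  apply LinearMap.ext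
  intro x
  have h1 := LinearMap.congr_fun hd (Pi.single (sndRow e) x)
  rw [LinearMap.comp_apply, LinearMap.comp_apply, band_d_eq, mk1_single_g] at h1
  rw [hs] at h1
  have h2 := congrFun h1 (lastRow e)
  rw [Fm_apply, mk1_apply', if_pos rfl, if_pos rfl, Pi.single_eq_same,
    Pi.single_eq_of_ne snd_ne_last, map_zero, add_zero, Fm_apply,
    if_neg snd_ne_last, add_zero, Pi.single_eq_same] at h2
  simp only [LinearMap.comp_apply]
  exact h2

theorem Fm_comm_mk1 (he : 2 ≤ e) (A C : Module.End k (Fin n → k))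
    (src dst : Fin (e + 1)) (hsrc : src ≠ lastRow e) (hdst : dst ≠ sndRow e) :
    Fm k e n A C ∘ₗ mk1 src dst LinearMap.id =
      mk1 src dst LinearMap.id ∘ₗ Fm k e n A C := by
  apply LinearMap.ext
  intro w
  funext r
  rw [LinearMap.comp_apply, LinearMap.comp_apply, Fm_apply, mk1_apply', mk1_apply',
    mk1_apply']
  simp only [LinearMap.id_coe, id_eq]
  rw [if_neg (show ¬ (sndRow e = dst) from fun h => hdst h.symm), map_zero, ite_self,
    add_zero]
  by_cases h1 : r = dst
  · rw [if_pos h1, if_pos h1, Fm_apply, if_neg hsrc, add_zero]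
  · rw [if_neg h1, if_neg h1, map_zero]

theorem Fm_mem (he : 2 ≤ e) (A C : Module.End k (Fin n → k))
    (hA : A ∘ₗ Jl k n lam = Jl k n lam ∘ₗ A) :
    Fm k e n A C ∈ homSet (band k e n lam) (band k e n lam) := by
  have hee := epos (e := e)
  refine ⟨fun i => ?_, fun j => ?_, ?_⟩
  · apply LinearMap.ext
    intro w
    funext r
    rw [LinearMap.comp_apply, LinearMap.comp_apply, band_v_eq, Fm_apply, prj_apply',
      prj_apply', prj_apply']
    by_cases h2 : r = lastRow e
    · subst h2
      rw [if_pos rfl]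
      by_cases h1 : vrt e (lastRow e) = i
      · have hs : vrt e (sndRow e) = i := by rw [vrt_snd, ← vrt_last]; exact h1
        rw [if_pos h1, if_pos h1, if_pos hs, Fm_apply, if_pos rfl]
      · have hs : ¬ vrt e (sndRow e) = i := by rw [vrt_snd, ← vrt_last]; exact h1
        rw [if_neg h1, if_neg h1, if_neg hs, map_zero, map_zero, add_zero]
    · rw [if_neg h2, add_zero]
      by_cases h1 : vrt e r = i
      · rw [if_pos h1, if_pos h1, Fm_apply, if_neg h2, add_zero]
      · rw [if_neg h1, if_neg h1, map_zero]
  · rw [band_a_eq]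
    by_cases hj1 : (j : ℕ) = e - 1
    · rw [if_pos hj1]
      refine Fm_comm_mk1 he A C _ _ snd_ne_last ?_
      simp [sndRow, Fin.ext_iff]
      omega
    · rw [if_neg hj1]
      by_cases hj2 : (j : ℕ) = e - 2
      · rw [if_pos hj2]
        refine Fm_comm_mk1 he A C _ _ ?_ (Ne.symm snd_ne_last)
        simp [lastRow, Fin.ext_iff]
        omega
      · rw [if_neg hj2]
        have hje := j.isLt
        refine Fm_comm_mk1 he A C _ _ ?_ ?_
        · simp [lastRow, Fin.ext_iff]
          omega
        · simp [sndRow, Fin.ext_iff]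
          omega
  · apply LinearMap.ext
    intro w
    funext r
    rw [LinearMap.comp_apply, LinearMap.comp_apply, band_d_eq, Fm_apply, mk1_apply',
      mk1_apply', mk1_apply']
    rw [if_neg snd_ne_last, map_zero, ite_self, add_zero]
    by_cases h1 : r = lastRow e
    · rw [if_pos h1, if_pos h1, Fm_apply, if_neg snd_ne_last, add_zero]
      exact LinearMap.congr_fun hA (w (sndRow e))
    · rw [if_neg h1, if_neg h1, map_zero]

variable (k e n lam)

lemma Af_add (f g : (Fin (e + 1) → Fin n → k) →ₗ[k] (Fin (e + 1) → Fin n → k)) :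
    Af k e n (f + g) = Af k e n f + Af k e n g := by
  unfold Af
  rw [LinearMap.add_comp, LinearMap.comp_add]

lemma Af_smul (t : k) (f : (Fin (e + 1) → Fin n → k) →ₗ[k] (Fin (e + 1) → Fin n → k)) :
    Af k e n (t • f) = t • Af k e n f := by
  unfold Af
  rw [LinearMap.smul_comp, LinearMap.comp_smul]

lemma Cf_add (f g : (Fin (e + 1) → Fin n → k) →ₗ[k] (Fin (e + 1) → Fin n → k)) :
    Cf k e n (f + g) = Cf k e n f + Cf k e n g := by
  unfold Cf
  rw [LinearMap.add_comp, LinearMap.comp_add]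

lemma Cf_smul (t : k) (f : (Fin (e + 1) → Fin n → k) →ₗ[k] (Fin (e + 1) → Fin n → k)) :
    Cf k e n (t • f) = t • Cf k e n f := by
  unfold Cf
  rw [LinearMap.smul_comp, LinearMap.comp_smul]

/-- The linear map sending an endomorphism of the band module to the pair
(first row of the diagonal block, corner block). -/
def Phi : (homSet (band k e n lam) (band k e n lam)) →ₗ[k]
    ((Fin n → k) × Module.End k (Fin n → k)) where
  toFun f := (fun j => Af k e n f.1 (Pi.single j 1) ⟨0, j.pos⟩, Cf k e n f.1)
  map_add' f g := by
    have h1 : ((f + g : homSet (band k e n lam) (band k e n lam)) :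
        (Fin (e + 1) → Fin n → k) →ₗ[k] (Fin (e + 1) → Fin n → k)) = f.1 + g.1 := rfl
    simp only [h1, Af_add, Cf_add, Prod.mk_add_mk, Prod.mk.injEq]
    constructor
    · funext j
      simp
    · trivial
  map_smul' t f := by
    have h1 : ((t • f : homSet (band k e n lam) (band k e n lam)) :
        (Fin (e + 1) → Fin n → k) →ₗ[k] (Fin (e + 1) → Fin n → k)) = t • f.1 := rfl
    simp only [h1, Af_smul, Cf_smul, RingHom.id_apply, Prod.smul_mk, Prod.mk.injEq]
    constructor
    · funext j
      simp
    · trivial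

variable {k e n lam}

theorem Phi_injective (he : 2 ≤ e) : Function.Injective (Phi k e n lam) := by
  rw [injective_iff_map_eq_zero]
  intro f hf0
  rw [Prod.ext_iff] at hf0
  obtain ⟨h1, h2⟩ := hf0
  have hA0 : Af k e n f.1 = 0 := by
    refine cent_eq_zero (lam := lam) _ (Af_comm he f.1 f.2) (fun j => ?_)
    have := congrFun h1 j
    exact this
  have hC0 : Cf k e n f.1 = 0 := h2
  have hf : f.1 = 0 := by
    rw [band_struct he f.1 f.2, hA0, hC0]
    apply LinearMap.ext
    intro v
    funext r
    rw [Fm_apply]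
    simp only [LinearMap.zero_apply, ite_self, add_zero, zero_add, Pi.zero_apply]
    rfl
  exact Subtype.ext hf

theorem Phi_surjective (he : 2 ≤ e) : Function.Surjective (Phi k e n lam) := by
  rintro ⟨c, C⟩
  set A := Matrix.mulVecLin (Tmat c) with hAdef
  have hA : A ∘ₗ Jl k n lam = Jl k n lam ∘ₗ A := by
    rw [hAdef, Jl, ← Matrix.mulVecLin_mul, ← Matrix.mulVecLin_mul, Tmat_comm]
  have hAf : Af k e n (Fm k e n A C) = A := by
    apply LinearMap.ext
    intro x
    rw [Af_apply, Fm_apply, if_neg snd_ne_last, add_zero, Pi.single_eq_same]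
  have hCf : Cf k e n (Fm k e n A C) = C := by
    apply LinearMap.ext
    intro x
    rw [Cf_apply, Fm_apply, if_pos rfl, Pi.single_eq_same,
      Pi.single_eq_of_ne (Ne.symm snd_ne_last), map_zero, zero_add]
  refine ⟨⟨Fm k e n A C, Fm_mem he A C hA⟩, ?_⟩
  rw [Prod.ext_iff]
  constructor
  · funext j
    show Af k e n (Fm k e n A C) (Pi.single j 1) ⟨0, j.pos⟩ = c j
    rw [hAf, hAdef]
    rw [Matrix.mulVecLin_apply, Matrix.mulVec_single]
    show Tmat c ⟨0, j.pos⟩ j * 1 = c j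
    rw [mul_one]
    simp only [Tmat, Matrix.of_apply]
    rw [dif_pos (by simp)]
    congr 1
  · exact hCf

end BandEnd

end Aux1

/-- For every `n ≥ 1` and `λ ≠ 0`, the space of `Λ_e`-module
endomorphisms of the band module `B(n, λ)` has `k`-dimension `n² + n`. -/
theorem band_end_dim (k : Type) [Field k] (e : ℕ) (he : 2 ≤ e) [NeZero e]
    (n : ℕ) (hn : 1 ≤ n) (lam : k) (hlam : lam ≠ 0) :
    Module.finrank k (homSet (band k e n lam) (band k e n lam)) = n ^ 2 + n := by
  have E := LinearEquiv.ofBijective (Phi k e n lam)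
    ⟨Phi_injective he, Phi_surjective he⟩
  rw [E.finrank_eq, Module.finrank_prod, Module.finrank_fin_fun,
    Module.finrank_linearMap, Module.finrank_fin_fun]
  ring

end GBTA
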